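/- arXiv:2110.08649 — 3 statements merged into one kernel-verified Lean document; each statement's English description precedes it below -/
import Mathlib

section
/- Let G be a group and R : G → O(n) an orthogonal representation of G on ℝⁿ (so each R_g is a linear isometry of ℝⁿ). Let φ : ℝⁿ → ℝⁿ be a C¹ diffeomorphism that is G-equivariant, i.e., φ(R_g x) = R_g φ(x) for all g and x. Let q : ℝⁿ → ℝ≥0 be a G-invariant function, i.e., q(R_g x) = q(x) for all g, x. Define p : ℝⁿ → ℝ≥0 by p(y) = q(φ⁻¹(y)) · |det Dφ⁻¹(y)|, where Dφ⁻¹(y) is the Fréchet derivative of φ⁻¹ at y. Then p is G-invariant: p(R_g y) = p(y) for all g ∈ G and y ∈ ℝⁿ. -/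
/-- Pushforward density of a `G`-invariant density under a `G`-equivariant
`C¹` diffeomorphism (for an orthogonal representation `R`) is `G`-invariant. -/
theorem pushforward_density_invariant
    {G : Type*} [Group G] {n : ℕ}
    (R : G →* (EuclideanSpace ℝ (Fin n) ≃ₗᵢ[ℝ] EuclideanSpace ℝ (Fin n)))
    (φ φinv : EuclideanSpace ℝ (Fin n) → EuclideanSpace ℝ (Fin n))
    (hφ : ContDiff ℝ 1 φ) (hφinv : ContDiff ℝ 1 φinv)
    (hleft : Function.LeftInverse φinv φ) (hright : Function.RightInverse φinv φ)
    (hequiv : ∀ (g : G) (x : EuclideanSpace ℝ (Fin n)), φ (R g x) = R g (φ x))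
    (q : EuclideanSpace ℝ (Fin n) → NNReal)
    (hq : ∀ (g : G) (x : EuclideanSpace ℝ (Fin n)), q (R g x) = q x)
    (p : EuclideanSpace ℝ (Fin n) → NNReal)
    (hp : ∀ y, (p y : ℝ) = (q (φinv y) : ℝ) * |(fderiv ℝ φinv y).det|) :
    ∀ (g : G) (y : EuclideanSpace ℝ (Fin n)), p (R g y) = p y := by
  intro g y
  -- φinv is equivariant
  have hinv_equiv : ∀ (g : G) (x : EuclideanSpace ℝ (Fin n)),
      φinv (R g x) = R g (φinv x) := by
    intro g x
    have : φ (R g (φinv x)) = R g x := by rw [hequiv, hright]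
    calc φinv (R g x) = φinv (φ (R g (φinv x))) := by rw [this]
      _ = R g (φinv x) := hleft _
  have hdiff : Differentiable ℝ φinv := hφinv.differentiable one_ne_zero
  -- continuous linear map of R g
  set A : EuclideanSpace ℝ (Fin n) →L[ℝ] EuclideanSpace ℝ (Fin n) :=
    (R g).toContinuousLinearEquiv.toContinuousLinearMap with hA
  set B : EuclideanSpace ℝ (Fin n) →L[ℝ] EuclideanSpace ℝ (Fin n) :=
    (R g⁻¹).toContinuousLinearEquiv.toContinuousLinearMap with hB
  have hRR : ∀ x, R g (R g⁻¹ x) = x := by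
    intro x
    have h1 : R g * R g⁻¹ = 1 := by rw [← map_mul]; simp
    calc R g (R g⁻¹ x) = (R g * R g⁻¹) x := rfl
      _ = x := by rw [h1]; rfl
  have hAB : ∀ x, A (B x) = x := by
    intro x
    simp only [hA, hB, LinearIsometryEquiv.coe_toContinuousLinearEquiv,
      ContinuousLinearEquiv.coe_coe]
    exact hRR x
  -- express φinv at R g y
  have hfun : φinv = fun x => A (φinv (B x)) := by
    funext x
    have := hinv_equiv g (B x)
    simp only [hA, hB, LinearIsometryEquiv.coe_toContinuousLinearEquiv,
      ContinuousLinearEquiv.coe_coe] at *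
    show φinv x = R g (φinv (R g⁻¹ x))
    rw [← hinv_equiv g (R g⁻¹ x), hRR x]
  -- fderiv identity
  have hfd : fderiv ℝ φinv (R g y) =
      (A.comp (fderiv ℝ φinv (B (R g y)))).comp B := by
    conv_lhs => rw [hfun]
    rw [show (fun x => A (φinv (B x))) = A ∘ φinv ∘ B from rfl]
    rw [fderiv_comp _ (A.differentiable.differentiableAt)
      ((hdiff _).comp _ (B.differentiable.differentiableAt))]
    rw [fderiv_comp _ (hdiff _) (B.differentiable.differentiableAt)]
    simp only [ContinuousLinearMap.fderiv]
    rw [ContinuousLinearMap.comp_assoc]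
  have hBy : B (R g y) = y := by
    simp only [hB, LinearIsometryEquiv.coe_toContinuousLinearEquiv,
      ContinuousLinearEquiv.coe_coe]
    show R g⁻¹ (R g y) = y
    have h1 : R g⁻¹ * R g = 1 := by rw [← map_mul]; simp
    calc R g⁻¹ (R g y) = (R g⁻¹ * R g) y := rfl
      _ = y := by rw [h1]; rfl
  have hdet : (fderiv ℝ φinv (R g y)).det = (fderiv ℝ φinv y).det := by
    rw [hfd, hBy]
    have detcomp : ∀ (f h : EuclideanSpace ℝ (Fin n) →L[ℝ] EuclideanSpace ℝ (Fin n)),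
        (f.comp h).det = f.det * h.det := by
      intro f h
      simp only [ContinuousLinearMap.det, ContinuousLinearMap.coe_comp, LinearMap.det_comp]
      exact LinearMap.det_comp (f : EuclideanSpace ℝ (Fin n) →ₗ[ℝ] EuclideanSpace ℝ (Fin n)) h
    have hABdet : A.det * B.det = 1 := by
      rw [← detcomp]
      have hid : A.comp B = ContinuousLinearMap.id ℝ _ := by
        ext x : 1; exact hAB x
      rw [hid]
      simp [ContinuousLinearMap.det]
    rw [detcomp, detcomp]
    have : A.det * (fderiv ℝ φinv y).det * B.det
        = (A.det * B.det) * (fderiv ℝ φinv y).det := by ring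
    rw [this, hABdet, one_mul]
  have := hp (R g y)
  rw [hinv_equiv, hq, hdet, ← hp y] at this
  exact_mod_cast NNReal.coe_injective this
end

section
/- Let G be a group and d a positive integer, and suppose each g ∈ G acts on ℝᵈ by a permutation matrix R_g (i.e., via a homomorphism from G to the group of d × d permutation matrices). Let G act on ℝ²ᵈ = ℝᵈ × ℝᵈ diagonally: g•(x₁, x₂) = (R_g x₁, R_g x₂). Let s, t : ℝᵈ → ℝᵈ be G-equivariant: s(R_g x) = R_g s(x) and t(R_g x) = R_g t(x) for all g, x. Define the coupling layer C : ℝᵈ × ℝᵈ → ℝᵈ × ℝᵈ by C(x₁, x₂) = (x₁, x₂ ⊙ s(x₁) + t(x₁)), where ⊙ denotes componentwise (Hadamard) product. Then C is G-equivariant: C(g•(x₁, x₂)) = g•C(x₁, x₂) for all g ∈ G and (x₁, x₂) ∈ ℝᵈ × ℝᵈ. -/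
/-- The linear action of a permutation on `ℝᵈ` given by its permutation matrix:
`(P_π x)_j = x_{π⁻¹(j)}`. -/
def permMatAction {d : ℕ} (π : Equiv.Perm (Fin d)) (x : Fin d → ℝ) : Fin d → ℝ :=
  fun j => x (π⁻¹ j)

/-- `G`-coupling layers are `G`-equivariant: if `G` acts on `ℝᵈ` by permutation matrices
(via a homomorphism `ρ`), acts diagonally on `ℝ²ᵈ = ℝᵈ × ℝᵈ`, and `s, t : ℝᵈ → ℝᵈ` are
`G`-equivariant, then the coupling layer `C(x₁, x₂) = (x₁, x₂ ⊙ s(x₁) + t(x₁))` is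
`G`-equivariant. -/
theorem g_coupling_layer_equivariant
    {G : Type*} [Group G] {d : ℕ}
    (ρ : G →* Equiv.Perm (Fin d))
    (s t : (Fin d → ℝ) → (Fin d → ℝ))
    (hs : ∀ (g : G) (x : Fin d → ℝ), s (permMatAction (ρ g) x) = permMatAction (ρ g) (s x))
    (ht : ∀ (g : G) (x : Fin d → ℝ), t (permMatAction (ρ g) x) = permMatAction (ρ g) (t x))
    (C : (Fin d → ℝ) × (Fin d → ℝ) → (Fin d → ℝ) × (Fin d → ℝ))
    (hC : ∀ x₁ x₂ : Fin d → ℝ, C (x₁, x₂) = (x₁, x₂ * s x₁ + t x₁)) :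
    ∀ (g : G) (x₁ x₂ : Fin d → ℝ),
      C (permMatAction (ρ g) x₁, permMatAction (ρ g) x₂)
        = (permMatAction (ρ g) (C (x₁, x₂)).1, permMatAction (ρ g) (C (x₁, x₂)).2) := by
  intro g x₁ x₂
  rw [hC, hC, hs, ht]
  refine Prod.ext rfl ?_
  funext j
  simp [permMatAction]
end

section
/- Let G be a group, d and k positive integers, n = k·d, and for each g ∈ G and each block index i ∈ {1, …, k} let R_g be a d × d permutation matrix given by a homomorphism from G into the d × d permutation matrices; let G act on ℝⁿ = (ℝᵈ)ᵏ blockwise by g•(x⁽¹⁾, …, x⁽ᵏ⁾) = (R_g x⁽¹⁾, …, R_g x⁽ᵏ⁾). For each i, let sᵢ, tᵢ : (ℝᵈ)^{i−1} → ℝᵈ be G-equivariant: sᵢ(R_g x⁽¹⁾, …, R_g x⁽ⁱ⁻¹⁾) = R_g sᵢ(x⁽¹⁾, …, x⁽ⁱ⁻¹⁾), and similarly for tᵢ. Define the inverse autoregressive flow layer I : (ℝᵈ)ᵏ → (ℝᵈ)ᵏ by I(x)⁽ⁱ⁾ = sᵢ(x⁽¹⁾, …, x⁽ⁱ⁻¹⁾)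 ⊙ x⁽ⁱ⁾ + tᵢ(x⁽¹⁾, …, x⁽ⁱ⁻¹⁾), where ⊙ is the componentwise product on ℝᵈ. Then I is G-equivariant: I(g•x) = g•I(x) for all g ∈ G and x ∈ (ℝᵈ)ᵏ. -/
/-- The blocks preceding block `i` of `x ∈ (ℝᵈ)ᵏ`. -/
def prevBlocks {d k : ℕ} (x : Fin k → Fin d → ℝ) (i : Fin k) :
    Fin i → Fin d → ℝ :=
  fun j => x (Fin.castLE i.isLt.le j)

/-- `G`-Inverse Autoregressive Flow layers are `G`-equivariant: if `G` acts on each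
block `ℝᵈ` of `ℝⁿ = (ℝᵈ)ᵏ` by permutation matrices (via `ρ`) and the blockwise scale
and translation maps `sᵢ, tᵢ` (depending only on preceding blocks) are `G`-equivariant,
then the IAF layer `I(x)⁽ⁱ⁾ = sᵢ(x⁽¹⁾,…,x⁽ⁱ⁻¹⁾) ⊙ x⁽ⁱ⁾ + tᵢ(x⁽¹⁾,…,x⁽ⁱ⁻¹⁾)` is
`G`-equivariant. -/
theorem g_iaf_layer_equivariant
    {G : Type*} [Group G] {d k : ℕ}
    (ρ : G →* Equiv.Perm (Fin d))
    (s t : (i : Fin k) → (Fin i → Fin d → ℝ) → (Fin d → ℝ))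
    (hs : ∀ (g : G) (i : Fin k) (xs : Fin i → Fin d → ℝ),
      s i (fun j => permMatAction (ρ g) (xs j)) = permMatAction (ρ g) (s i xs))
    (ht : ∀ (g : G) (i : Fin k) (xs : Fin i → Fin d → ℝ),
      t i (fun j => permMatAction (ρ g) (xs j)) = permMatAction (ρ g) (t i xs))
    (I : (Fin k → Fin d → ℝ) → (Fin k → Fin d → ℝ))
    (hI : ∀ (x : Fin k → Fin d → ℝ) (i : Fin k),
      I x i = s i (prevBlocks x i) * x i + t i (prevBlocks x i)) :
    ∀ (g : G) (x : Fin k → Fin d → ℝ),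
      I (fun i => permMatAction (ρ g) (x i)) = fun i => permMatAction (ρ g) (I x i) := by
  intro g x
  funext i
  have hp : prevBlocks (fun i => permMatAction (ρ g) (x i)) i
      = fun j => permMatAction (ρ g) (prevBlocks x i j) := rfl
  rw [hI, hI, hp, hs, ht]
  funext j
  simp [permMatAction, Pi.add_apply, Pi.mul_apply]
end
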